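/- arXiv:2601.22611 — 2 statements merged into one kernel-verified Lean document; each statement's English description precedes it below -/
import Mathlib

section
/- Let ū ∈ C¹([0,1]) with ū' bounded, and γ₂ ∈ ℝ. Define A on L²(0,1) with domain D(A) = {ψ ∈ H⁴(0,1) : ψ'(0) = ψ'(1) = 0, ψ'''(0) = ψ'''(1) = 0} by Aψ = −ψ'''' − ū ψ' − γ₂ ψ''. Then A is quasi-dissipative: there exists β > 0 (one can take β = ‖ū'‖_∞/2 + γ₂²/2) such that ⟨Aψ, ψ⟩_{L²} ≤ β ‖ψ‖²_{L²} for all ψ ∈ D(A); more precisely, ⟨Aψ, ψ⟩ ≤ −(1/2)‖ψ''‖²_{L²} + β‖ψ‖²_{L²}. -/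
open intervalIntegral MeasureTheory

/-- Quasi-dissipativity of `Aψ = -ψ'''' - ubar ψ' - γ₂ ψ''` with Neumann-type boundary
conditions: `⟨Aψ,ψ⟩ ≤ -(1/2)‖ψ''‖² + β‖ψ‖²` with `β = ‖ubar'‖_∞/2 + γ₂²/2`, and in
particular `⟨Aψ,ψ⟩ ≤ β‖ψ‖²`. -/
theorem stmt7 (ubar : ℝ → ℝ) (hubar : ContDiff ℝ 1 ubar) (hubar0 : ubar 0 = 0) (hubar1 : ubar 1 = 0)
    (B γ₂ : ℝ) (hB : ∀ x ∈ Set.Icc (0 : ℝ) 1, |deriv ubar x| ≤ B)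
    (ψ : ℝ → ℝ) (hψ : ContDiff ℝ 4 ψ)
    (hb1 : deriv ψ 0 = 0) (hb2 : deriv ψ 1 = 0)
    (hb3 : iteratedDeriv 3 ψ 0 = 0) (hb4 : iteratedDeriv 3 ψ 1 = 0) :
    (∫ x in (0 : ℝ)..1,
        (-(iteratedDeriv 4 ψ x) - ubar x * deriv ψ x - γ₂ * iteratedDeriv 2 ψ x) * ψ x) ≤
      -(1 / 2) * (∫ x in (0 : ℝ)..1, (iteratedDeriv 2 ψ x) ^ 2) +
        (B / 2 + γ₂ ^ 2 / 2) * (∫ x in (0 : ℝ)..1, (ψ x) ^ 2) ∧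
    (∫ x in (0 : ℝ)..1,
        (-(iteratedDeriv 4 ψ x) - ubar x * deriv ψ x - γ₂ * iteratedDeriv 2 ψ x) * ψ x) ≤
      (B / 2 + γ₂ ^ 2 / 2) * (∫ x in (0 : ℝ)..1, (ψ x) ^ 2) := by
  set f1 := deriv ψ with hf1
  set f2 := iteratedDeriv 2 ψ with hf2
  set f3 := iteratedDeriv 3 ψ with hf3
  set f4 := iteratedDeriv 4 ψ with hf4
  -- continuity
  have hc0 : Continuous ψ := hψ.continuous
  have hc1 : Continuous f1 := by
    simpa [iteratedDeriv_one] using hψ.continuous_iteratedDeriv 1 (by norm_num)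
  have hc2 : Continuous f2 := hψ.continuous_iteratedDeriv 2 (by norm_num)
  have hc3 : Continuous f3 := hψ.continuous_iteratedDeriv 3 (by norm_num)
  have hc4 : Continuous f4 := hψ.continuous_iteratedDeriv 4 (by norm_num)
  have hcu : Continuous ubar := hubar.continuous
  have hcu' : Continuous (deriv ubar) := (hubar.iterate_deriv' 0 1).continuous
  -- derivatives
  have hd0 : ∀ x : ℝ, HasDerivAt ψ (f1 x) x := fun x =>
    ((hψ.differentiable_iteratedDeriv 0 (by norm_num)) x).hasDerivAt |>.congr_deriv
      (by simp [hf1])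
  have hd1 : ∀ x : ℝ, HasDerivAt f1 (f2 x) x := by
    intro x
    have := ((hψ.differentiable_iteratedDeriv 1 (by norm_num)) x).hasDerivAt
    simpa [hf1, hf2, iteratedDeriv_one, iteratedDeriv_succ] using this
  have hd2 : ∀ x : ℝ, HasDerivAt f2 (f3 x) x := by
    intro x
    have := ((hψ.differentiable_iteratedDeriv 2 (by norm_num)) x).hasDerivAt
    simpa [hf2, hf3, iteratedDeriv_succ] using this
  have hd3 : ∀ x : ℝ, HasDerivAt f3 (f4 x) x := by
    intro x
    have := ((hψ.differentiable_iteratedDeriv 3 (by norm_num)) x).hasDerivAt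
    simpa [hf3, hf4, iteratedDeriv_succ] using this
  have hdu : ∀ x : ℝ, HasDerivAt ubar (deriv ubar x) x := fun x =>
    ((hubar.differentiable (by norm_num)) x).hasDerivAt
  -- integration by parts 1: ∫ ψ f4 = -∫ f1 f3
  have ibp1 : (∫ x in (0:ℝ)..1, ψ x * f4 x) = -∫ x in (0:ℝ)..1, f1 x * f3 x := by
    have := integral_mul_deriv_eq_deriv_mul (u := ψ) (v := f3) (u' := f1) (v' := f4)
      (fun x _ => hd0 x) (fun x _ => hd3 x)
      (hc1.intervalIntegrable 0 1) (hc4.intervalIntegrable 0 1)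
    rw [this, hb3, hb4]; ring
  -- integration by parts 2: ∫ f1 f3 = -∫ f2²
  have ibp2 : (∫ x in (0:ℝ)..1, f1 x * f3 x) = -∫ x in (0:ℝ)..1, f2 x ^ 2 := by
    have := integral_mul_deriv_eq_deriv_mul (u := f1) (v := f2) (u' := f2) (v' := f3)
      (fun x _ => hd1 x) (fun x _ => hd2 x)
      (hc2.intervalIntegrable 0 1) (hc3.intervalIntegrable 0 1)
    rw [this, hb1, hb2]
    rw [show (∫ x in (0:ℝ)..1, f2 x * f2 x) = ∫ x in (0:ℝ)..1, f2 x ^ 2 by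
      congr 1; ext x; ring]
    ring
  have key1 : (∫ x in (0:ℝ)..1, ψ x * f4 x) = ∫ x in (0:ℝ)..1, f2 x ^ 2 := by
    rw [ibp1, ibp2]; ring
  -- integration by parts 3: ∫ ū ψ f1 = -(1/2) ∫ ū' ψ²
  have ibp3 : (∫ x in (0:ℝ)..1, ubar x * (ψ x * f1 x)) =
      -∫ x in (0:ℝ)..1, deriv ubar x * (ψ x ^ 2 / 2) := by
    have hg : ∀ x : ℝ, HasDerivAt (fun y => ψ y ^ 2 / 2) (ψ x * f1 x) x := by
      intro x
      have h : HasDerivAt (fun y => ψ y * ψ y / 2) ((f1 x * ψ x + ψ x * f1 x) / 2) x :=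
        ((hd0 x).mul (hd0 x)).div_const 2
      have heq : (fun y => ψ y ^ 2 / 2) = fun y => ψ y * ψ y / 2 := by
        funext y; ring
      rw [heq]
      convert h using 1
      ring
    have := integral_mul_deriv_eq_deriv_mul (u := ubar) (v := fun y => ψ y ^ 2 / 2)
      (u' := deriv ubar) (v' := fun x => ψ x * f1 x)
      (fun x _ => hdu x) (fun x _ => hg x)
      (hcu'.intervalIntegrable 0 1) ((hc0.mul hc1).intervalIntegrable 0 1)
    rw [this, hubar0, hubar1]; ring
  -- split the integral
  have hsplit : (∫ x in (0:ℝ)..1, (-(f4 x) - ubar x * f1 x - γ₂ * f2 x) * ψ x) =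
      (-∫ x in (0:ℝ)..1, ψ x * f4 x) - (∫ x in (0:ℝ)..1, ubar x * (ψ x * f1 x))
        + ∫ x in (0:ℝ)..1, -γ₂ * (f2 x * ψ x) := by
    rw [← intervalIntegral.integral_neg, ← intervalIntegral.integral_sub, ←
      intervalIntegral.integral_add]
    · congr 1; ext x; ring
    · exact ((hc0.mul hc4).neg.sub (hcu.mul (hc0.mul hc1))).intervalIntegrable 0 1
    · exact ((continuous_const.mul (hc2.mul hc0))).intervalIntegrable 0 1
    · exact (hc0.mul hc4).neg.intervalIntegrable 0 1
    · exact (hcu.mul (hc0.mul hc1)).intervalIntegrable 0 1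
  -- bound the middle term
  have hBnn : (0:ℝ) ≤ B := le_trans (abs_nonneg _) (hB 0 (by norm_num))
  have bound2 : (∫ x in (0:ℝ)..1, deriv ubar x * (ψ x ^ 2 / 2)) ≤
      (B / 2) * ∫ x in (0:ℝ)..1, ψ x ^ 2 := by
    rw [show (B / 2) * (∫ x in (0:ℝ)..1, ψ x ^ 2) =
        ∫ x in (0:ℝ)..1, (B / 2) * ψ x ^ 2 from
      (intervalIntegral.integral_const_mul _ _).symm]
    apply intervalIntegral.integral_mono_on (by norm_num)
    · exact ((hcu'.mul ((hc0.pow 2).div_const 2))).intervalIntegrable 0 1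
    · exact (continuous_const.mul (hc0.pow 2)).intervalIntegrable 0 1
    · intro x hx
      have h1 : deriv ubar x ≤ B := le_trans (le_abs_self _) (hB x hx)
      have h2 : -B ≤ deriv ubar x := by
        have := hB x hx
        linarith [neg_abs_le (deriv ubar x)]
      nlinarith [sq_nonneg (ψ x)]
  -- bound the Young term
  have bound3 : (∫ x in (0:ℝ)..1, -γ₂ * (f2 x * ψ x)) ≤
      ∫ x in (0:ℝ)..1, ((1/2) * f2 x ^ 2 + (γ₂ ^ 2 / 2) * ψ x ^ 2) := by
    apply intervalIntegral.integral_mono_on (by norm_num)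
    · exact (continuous_const.mul (hc2.mul hc0)).intervalIntegrable 0 1
    · exact ((continuous_const.mul (hc2.pow 2)).add
        (continuous_const.mul (hc0.pow 2))).intervalIntegrable 0 1
    · intro x _
      nlinarith [sq_nonneg (f2 x + γ₂ * ψ x)]
  have hy : (∫ x in (0:ℝ)..1, ((1/2) * f2 x ^ 2 + (γ₂ ^ 2 / 2) * ψ x ^ 2)) =
      (1/2) * (∫ x in (0:ℝ)..1, f2 x ^ 2) + (γ₂ ^ 2 / 2) * ∫ x in (0:ℝ)..1, ψ x ^ 2 := by
    rw [intervalIntegral.integral_add, intervalIntegral.integral_const_mul,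
      intervalIntegral.integral_const_mul]
    · exact (continuous_const.mul (hc2.pow 2)).intervalIntegrable 0 1
    · exact (continuous_const.mul (hc0.pow 2)).intervalIntegrable 0 1
  have first : (∫ x in (0:ℝ)..1, (-(f4 x) - ubar x * f1 x - γ₂ * f2 x) * ψ x) ≤
      -(1 / 2) * (∫ x in (0:ℝ)..1, f2 x ^ 2) +
        (B / 2 + γ₂ ^ 2 / 2) * ∫ x in (0:ℝ)..1, ψ x ^ 2 := by
    rw [hsplit, key1, ibp3]
    have := bound3
    rw [hy] at this
    linarith [bound2]
  have hnn : (0:ℝ) ≤ ∫ x in (0:ℝ)..1, f2 x ^ 2 :=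
    intervalIntegral.integral_nonneg (by norm_num) (fun x _ => sq_nonneg _)
  exact ⟨first, le_trans first (by linarith)⟩
end

section
/- Let ū ∈ C¹([0,1]), γ₂ ∈ ℝ, and set β = ‖ū'‖_∞/2 + γ₂²/2. For λ₀ > β, the bilinear form a(ψ,φ) = λ₀∫₀¹ψφ + ∫₀¹ψ''φ'' + ∫₀¹ū ψ'φ + γ₂∫₀¹ψ''φ on the space H²₁ = {φ ∈ H²(0,1) : φ'(0) = φ'(1) = 0} is continuous and coercive: there exists C > 0 with a(ψ,ψ) ≥ C(‖ψ‖²_{L²} + ‖ψ''‖²_{L²}) for all ψ ∈ H²₁. -/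
open intervalIntegral MeasureTheory Real

lemma it2_eq (ψ : ℝ → ℝ) : iteratedDeriv 2 ψ = deriv (deriv ψ) := by
  rw [iteratedDeriv_succ, iteratedDeriv_one]

lemma cd_deriv {ψ : ℝ → ℝ} (hψ : ContDiff ℝ 2 ψ) : ContDiff ℝ 1 (deriv ψ) := by
  have := (contDiff_succ_iff_deriv (n := 1)).mp (by exact_mod_cast hψ)
  exact this.2.2

lemma cont_it2 {ψ : ℝ → ℝ} (hψ : ContDiff ℝ 2 ψ) : Continuous (iteratedDeriv 2 ψ) := by
  rw [it2_eq]
  exact (cd_deriv hψ).continuous_deriv le_rfl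

lemma hda_deriv {ψ : ℝ → ℝ} (hψ : ContDiff ℝ 2 ψ) (x : ℝ) :
    HasDerivAt (deriv ψ) (iteratedDeriv 2 ψ x) x := by
  rw [it2_eq]
  exact ((cd_deriv hψ).differentiable one_ne_zero x).hasDerivAt

lemma hda_self {ψ : ℝ → ℝ} (hψ : ContDiff ℝ 2 ψ) (x : ℝ) :
    HasDerivAt ψ (deriv ψ x) x :=
  (hψ.differentiable (by norm_num) x).hasDerivAt

lemma int_sq_nonneg (f : ℝ → ℝ) : 0 ≤ ∫ x in (0:ℝ)..1, f x ^ 2 :=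
  intervalIntegral.integral_nonneg (by norm_num) (fun x _ => sq_nonneg _)

lemma cs_int (f g : ℝ → ℝ) (hf : Continuous f) (hg : Continuous g) :
    |∫ x in (0:ℝ)..1, f x * g x| ≤
      Real.sqrt (∫ x in (0:ℝ)..1, f x ^ 2) * Real.sqrt (∫ x in (0:ℝ)..1, g x ^ 2) := by
  set A := ∫ x in (0:ℝ)..1, f x ^ 2 with hAdef
  set Cc := ∫ x in (0:ℝ)..1, g x ^ 2 with hCdef
  set Bb := ∫ x in (0:ℝ)..1, f x * g x with hBdef
  have hA : 0 ≤ A := int_sq_nonneg f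
  have hC : 0 ≤ Cc := int_sq_nonneg g
  have key : ∀ t : ℝ, 0 ≤ A * (t * t) + (2 * Bb) * t + Cc := by
    intro t
    have h0 : 0 ≤ ∫ x in (0:ℝ)..1, (t * f x + g x) ^ 2 :=
      intervalIntegral.integral_nonneg (by norm_num) (fun x _ => sq_nonneg _)
    have hexp : ∫ x in (0:ℝ)..1, (t * f x + g x) ^ 2
        = A * (t * t) + (2 * Bb) * t + Cc := by
      have hpt : ∀ x : ℝ, (t * f x + g x) ^ 2
          = (t * t) * f x ^ 2 + (2 * t) * (f x * g x) + g x ^ 2 := by intro x; ring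
      simp_rw [hpt]
      rw [intervalIntegral.integral_add, intervalIntegral.integral_add,
        intervalIntegral.integral_const_mul, intervalIntegral.integral_const_mul]
      · ring
      · exact (continuous_const.mul (hf.pow 2)).intervalIntegrable _ _
      · exact (continuous_const.mul (hf.mul hg)).intervalIntegrable _ _
      · exact ((continuous_const.mul (hf.pow 2)).add
          (continuous_const.mul (hf.mul hg))).intervalIntegrable _ _
      · exact (hg.pow 2).intervalIntegrable _ _
    linarith [hexp ▸ h0]
  have hdisc := discrim_le_zero key
  rw [discrim] at hdisc
  have hB2 : Bb ^ 2 ≤ A * Cc := by nlinarith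
  calc |Bb| = Real.sqrt (Bb ^ 2) := (Real.sqrt_sq_eq_abs _).symm
    _ ≤ Real.sqrt (A * Cc) := Real.sqrt_le_sqrt hB2
    _ = Real.sqrt A * Real.sqrt Cc := Real.sqrt_mul hA _

lemma ibp_dpsi {ψ : ℝ → ℝ} (hψ : ContDiff ℝ 2 ψ) (h0 : deriv ψ 0 = 0) (h1 : deriv ψ 1 = 0) :
    ∫ x in (0:ℝ)..1, (deriv ψ x) ^ 2 = - ∫ x in (0:ℝ)..1, iteratedDeriv 2 ψ x * ψ x := by
  have h := intervalIntegral.integral_mul_deriv_eq_deriv_mul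
    (a := 0) (b := 1) (u := deriv ψ) (v := ψ) (u' := iteratedDeriv 2 ψ) (v' := deriv ψ)
    (fun x _ => hda_deriv hψ x) (fun x _ => hda_self hψ x)
    ((cont_it2 hψ).intervalIntegrable _ _)
    (((cd_deriv hψ).continuous).intervalIntegrable _ _)
  simp only [h0, h1, zero_mul, sub_zero, zero_sub] at h
  calc ∫ x in (0:ℝ)..1, (deriv ψ x) ^ 2 = ∫ x in (0:ℝ)..1, deriv ψ x * deriv ψ x := by
        simp_rw [sq]
    _ = - ∫ x in (0:ℝ)..1, iteratedDeriv 2 ψ x * ψ x := h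

lemma ibp_ubar {ubar ψ : ℝ → ℝ} (hubar : ContDiff ℝ 1 ubar) (hu0 : ubar 0 = 0)
    (hu1 : ubar 1 = 0) (hψ : ContDiff ℝ 2 ψ) :
    ∫ x in (0:ℝ)..1, ubar x * deriv ψ x * ψ x
      = - (1/2) * ∫ x in (0:ℝ)..1, deriv ubar x * (ψ x) ^ 2 := by
  have hcψ := hψ.continuous
  have hcψ' := (cd_deriv hψ).continuous
  have hcu' := hubar.continuous_deriv le_rfl
  have h := intervalIntegral.integral_mul_deriv_eq_deriv_mul
    (a := 0) (b := 1) (u := ubar) (v := fun x => ψ x * ψ x)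
    (u' := deriv ubar) (v' := fun x => deriv ψ x * ψ x + ψ x * deriv ψ x)
    (fun x _ => (hubar.differentiable one_ne_zero x).hasDerivAt)
    (fun x _ => (hda_self hψ x).mul (hda_self hψ x))
    (hcu'.intervalIntegrable _ _)
    (((hcψ'.mul hcψ).add (hcψ.mul hcψ')).intervalIntegrable _ _)
  simp only [hu0, hu1, zero_mul, sub_zero, zero_sub] at h
  have h2 : ∫ x in (0:ℝ)..1, ubar x * (deriv ψ x * ψ x + ψ x * deriv ψ x)
      = 2 * ∫ x in (0:ℝ)..1, ubar x * deriv ψ x * ψ x := by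
    rw [← intervalIntegral.integral_const_mul]
    congr 1; ext x; ring
  have h3 : ∫ x in (0:ℝ)..1, deriv ubar x * (ψ x * ψ x)
      = ∫ x in (0:ℝ)..1, deriv ubar x * (ψ x) ^ 2 := by
    congr 1; ext x; ring
  rw [h2, h3] at h
  linarith

lemma ubar_bdd {ubar : ℝ → ℝ} (hubar : ContDiff ℝ 1 ubar) (hu0 : ubar 0 = 0)
    {B : ℝ} (hB : ∀ x ∈ Set.Icc (0 : ℝ) 1, |deriv ubar x| ≤ B) :
    ∀ x ∈ Set.Icc (0 : ℝ) 1, |ubar x| ≤ B := by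
  intro x hx
  have := Convex.norm_image_sub_le_of_norm_deriv_le (f := ubar) (s := Set.Icc (0:ℝ) 1)
    (fun y _ => (hubar.differentiable one_ne_zero y)) (fun y hy => hB y hy)
    (convex_Icc 0 1) (Set.mem_Icc.mpr ⟨le_refl 0, by norm_num⟩) hx
  rw [hu0] at this
  simp only [Real.norm_eq_abs, sub_zero] at this
  have hx1 : |x| ≤ 1 := by
    rw [abs_le]; exact ⟨by linarith [hx.1], hx.2⟩
  have hB0 : 0 ≤ B := le_trans (abs_nonneg _) (hB 0 (by norm_num))
  nlinarith [abs_nonneg (ubar x)]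

lemma dpsi_sqrt_bound {ψ : ℝ → ℝ} (hψ : ContDiff ℝ 2 ψ) (h0 : deriv ψ 0 = 0)
    (h1 : deriv ψ 1 = 0) :
    Real.sqrt (∫ x in (0:ℝ)..1, (deriv ψ x) ^ 2) ≤
      (Real.sqrt (∫ x in (0:ℝ)..1, (ψ x) ^ 2)
        + Real.sqrt (∫ x in (0:ℝ)..1, (iteratedDeriv 2 ψ x) ^ 2)) / 2 := by
  set a := Real.sqrt (∫ x in (0:ℝ)..1, (ψ x) ^ 2) with ha
  set b := Real.sqrt (∫ x in (0:ℝ)..1, (iteratedDeriv 2 ψ x) ^ 2) with hb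
  have ha0 : 0 ≤ a := Real.sqrt_nonneg _
  have hb0 : 0 ≤ b := Real.sqrt_nonneg _
  have hI : ∫ x in (0:ℝ)..1, (deriv ψ x) ^ 2 ≤ b * a := by
    rw [ibp_dpsi hψ h0 h1]
    calc - ∫ x in (0:ℝ)..1, iteratedDeriv 2 ψ x * ψ x
        ≤ |∫ x in (0:ℝ)..1, iteratedDeriv 2 ψ x * ψ x| := neg_le_abs _
      _ ≤ b * a := cs_int _ _ (cont_it2 hψ) hψ.continuous
  have h2 : ∫ x in (0:ℝ)..1, (deriv ψ x) ^ 2 ≤ ((a + b) / 2) ^ 2 := by nlinarith [sq_nonneg (a - b)]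
  calc Real.sqrt (∫ x in (0:ℝ)..1, (deriv ψ x) ^ 2)
      ≤ Real.sqrt (((a + b) / 2) ^ 2) := Real.sqrt_le_sqrt h2
    _ = (a + b) / 2 := Real.sqrt_sq (by linarith)

set_option maxHeartbeats 1000000 in
/-- Continuity and coercivity of the bilinear form
`a(ψ,φ) = lam0∫ψφ + ∫ψ''φ'' + ∫ubar ψ'φ + γ₂∫ψ''φ` on
`H²₁ = {φ ∈ H²(0,1) : φ'(0) = φ'(1) = 0}`, for `lam0 > β = ‖ubar'‖_∞/2 + γ₂²/2`. -/
theorem stmt8 (ubar : ℝ → ℝ) (hubar : ContDiff ℝ 1 ubar) (hubar0 : ubar 0 = 0) (hubar1 : ubar 1 = 0)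
    (B γ₂ lam0 : ℝ) (hB : ∀ x ∈ Set.Icc (0 : ℝ) 1, |deriv ubar x| ≤ B)
    (hlam : B / 2 + γ₂ ^ 2 / 2 < lam0) :
    (∃ C' : ℝ, 0 < C' ∧ ∀ ψ φ : ℝ → ℝ, ContDiff ℝ 2 ψ → ContDiff ℝ 2 φ →
      deriv ψ 0 = 0 → deriv ψ 1 = 0 → deriv φ 0 = 0 → deriv φ 1 = 0 →
      |lam0 * (∫ x in (0 : ℝ)..1, ψ x * φ x) +
          (∫ x in (0 : ℝ)..1, iteratedDeriv 2 ψ x * iteratedDeriv 2 φ x) +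
          (∫ x in (0 : ℝ)..1, ubar x * deriv ψ x * φ x) +
          γ₂ * (∫ x in (0 : ℝ)..1, iteratedDeriv 2 ψ x * φ x)| ≤
        C' * (Real.sqrt (∫ x in (0 : ℝ)..1, (ψ x) ^ 2) +
              Real.sqrt (∫ x in (0 : ℝ)..1, (iteratedDeriv 2 ψ x) ^ 2)) *
             (Real.sqrt (∫ x in (0 : ℝ)..1, (φ x) ^ 2) +
              Real.sqrt (∫ x in (0 : ℝ)..1, (iteratedDeriv 2 φ x) ^ 2))) ∧
    (∃ C : ℝ, 0 < C ∧ ∀ ψ : ℝ → ℝ, ContDiff ℝ 2 ψ →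
      deriv ψ 0 = 0 → deriv ψ 1 = 0 →
      C * ((∫ x in (0 : ℝ)..1, (ψ x) ^ 2) +
           (∫ x in (0 : ℝ)..1, (iteratedDeriv 2 ψ x) ^ 2)) ≤
        lam0 * (∫ x in (0 : ℝ)..1, (ψ x) ^ 2) +
          (∫ x in (0 : ℝ)..1, (iteratedDeriv 2 ψ x) ^ 2) +
          (∫ x in (0 : ℝ)..1, ubar x * deriv ψ x * ψ x) +
          γ₂ * (∫ x in (0 : ℝ)..1, iteratedDeriv 2 ψ x * ψ x)) := by
  have hB0 : 0 ≤ B := le_trans (abs_nonneg _) (hB 0 (by norm_num))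
  have hubdd := ubar_bdd hubar hubar0 hB
  constructor
  · -- continuity
    refine ⟨|lam0| + |γ₂| + B + 2, by positivity, ?_⟩
    intro ψ φ hψ hφ hψ0 hψ1 hφ0 hφ1
    set t1 := ∫ x in (0:ℝ)..1, ψ x * φ x with ht1def
    set t2 := ∫ x in (0:ℝ)..1, iteratedDeriv 2 ψ x * iteratedDeriv 2 φ x with ht2def
    set t3 := ∫ x in (0:ℝ)..1, ubar x * deriv ψ x * φ x with ht3def
    set t4 := ∫ x in (0:ℝ)..1, iteratedDeriv 2 ψ x * φ x with ht4def
    set aψ := Real.sqrt (∫ x in (0:ℝ)..1, (ψ x) ^ 2) with haψ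
    set bψ := Real.sqrt (∫ x in (0:ℝ)..1, (iteratedDeriv 2 ψ x) ^ 2) with hbψ
    set aφ := Real.sqrt (∫ x in (0:ℝ)..1, (φ x) ^ 2) with haφ
    set bφ := Real.sqrt (∫ x in (0:ℝ)..1, (iteratedDeriv 2 φ x) ^ 2) with hbφ
    have haψ0 : 0 ≤ aψ := Real.sqrt_nonneg _
    have hbψ0 : 0 ≤ bψ := Real.sqrt_nonneg _
    have haφ0 : 0 ≤ aφ := Real.sqrt_nonneg _
    have hbφ0 : 0 ≤ bφ := Real.sqrt_nonneg _
    have ht1 : |t1| ≤ aψ * aφ := cs_int _ _ hψ.continuous hφ.continuous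
    have ht2 : |t2| ≤ bψ * bφ := cs_int _ _ (cont_it2 hψ) (cont_it2 hφ)
    have ht4 : |t4| ≤ bψ * aφ := cs_int _ _ (cont_it2 hψ) hφ.continuous
    -- term 3
    have hcψ' : Continuous (deriv ψ) := (cd_deriv hψ).continuous
    have ht3a : |t3| ≤ Real.sqrt (∫ x in (0:ℝ)..1, (ubar x * deriv ψ x) ^ 2) * aφ :=
      cs_int (fun x => ubar x * deriv ψ x) φ (hubar.continuous.mul hcψ') hφ.continuous
    have ht3b : (∫ x in (0:ℝ)..1, (ubar x * deriv ψ x) ^ 2) ≤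
        B ^ 2 * ∫ x in (0:ℝ)..1, (deriv ψ x) ^ 2 := by
      rw [← intervalIntegral.integral_const_mul]
      apply intervalIntegral.integral_mono_on (by norm_num)
        (((hubar.continuous.mul hcψ').pow 2).intervalIntegrable _ _)
        ((continuous_const.mul (hcψ'.pow 2)).intervalIntegrable _ _)
      intro x hx
      have hux := hubdd x hx
      have hu2 : ubar x ^ 2 ≤ B ^ 2 := by nlinarith [sq_abs (ubar x), abs_nonneg (ubar x)]
      have hexp : (ubar x * deriv ψ x) ^ 2 = ubar x ^ 2 * deriv ψ x ^ 2 := by ring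
      show (ubar x * deriv ψ x) ^ 2 ≤ B ^ 2 * deriv ψ x ^ 2
      rw [hexp]
      exact mul_le_mul_of_nonneg_right hu2 (sq_nonneg _)
    have ht3c : Real.sqrt (∫ x in (0:ℝ)..1, (ubar x * deriv ψ x) ^ 2) ≤
        B * Real.sqrt (∫ x in (0:ℝ)..1, (deriv ψ x) ^ 2) := by
      calc Real.sqrt (∫ x in (0:ℝ)..1, (ubar x * deriv ψ x) ^ 2)
          ≤ Real.sqrt (B ^ 2 * ∫ x in (0:ℝ)..1, (deriv ψ x) ^ 2) := Real.sqrt_le_sqrt ht3b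
        _ = B * Real.sqrt (∫ x in (0:ℝ)..1, (deriv ψ x) ^ 2) := by
            rw [Real.sqrt_mul (sq_nonneg B), Real.sqrt_sq hB0]
    have hd := dpsi_sqrt_bound hψ hψ0 hψ1
    rw [← haψ, ← hbψ] at hd
    have ht3 : |t3| ≤ B * ((aψ + bψ) / 2) * aφ := by
      calc |t3| ≤ Real.sqrt (∫ x in (0:ℝ)..1, (ubar x * deriv ψ x) ^ 2) * aφ := ht3a
        _ ≤ (B * Real.sqrt (∫ x in (0:ℝ)..1, (deriv ψ x) ^ 2)) * aφ :=
            mul_le_mul_of_nonneg_right ht3c haφ0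
        _ ≤ B * ((aψ + bψ) / 2) * aφ :=
            mul_le_mul_of_nonneg_right (mul_le_mul_of_nonneg_left hd hB0) haφ0
    set P := aψ + bψ with hP
    set Q := aφ + bφ with hQ
    have hP0 : 0 ≤ P := by positivity
    have hQ0 : 0 ≤ Q := by positivity
    have e1 : aψ * aφ ≤ P * Q :=
      mul_le_mul (by rw [hP]; linarith) (by rw [hQ]; linarith) haφ0 hP0
    have e2 : bψ * bφ ≤ P * Q :=
      mul_le_mul (by rw [hP]; linarith) (by rw [hQ]; linarith) hbφ0 hP0
    have e4 : bψ * aφ ≤ P * Q :=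
      mul_le_mul (by rw [hP]; linarith) (by rw [hQ]; linarith) haφ0 hP0
    have e3 : ((aψ + bψ) / 2) * aφ ≤ P * Q :=
      mul_le_mul (by rw [hP]; linarith) (by rw [hQ]; linarith) haφ0 hP0
    have habs : |lam0 * t1 + t2 + t3 + γ₂ * t4| ≤ |lam0| * |t1| + |t2| + |t3| + |γ₂| * |t4| := by
      have k1 := abs_add_le (lam0 * t1 + t2 + t3) (γ₂ * t4)
      have k2 := abs_add_le (lam0 * t1 + t2) t3
      have k3 := abs_add_le (lam0 * t1) t2
      rw [abs_mul] at k1 k3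
      linarith
    have f1 : |lam0| * |t1| ≤ |lam0| * (P * Q) :=
      mul_le_mul_of_nonneg_left (le_trans ht1 e1) (abs_nonneg _)
    have f2 : |t2| ≤ P * Q := le_trans ht2 e2
    have f3 : |t3| ≤ B * (P * Q) := by
      calc |t3| ≤ B * ((aψ + bψ) / 2) * aφ := ht3
        _ = B * (((aψ + bψ) / 2) * aφ) := by ring
        _ ≤ B * (P * Q) := mul_le_mul_of_nonneg_left e3 hB0
    have f4 : |γ₂| * |t4| ≤ |γ₂| * (P * Q) :=
      mul_le_mul_of_nonneg_left (le_trans ht4 e4) (abs_nonneg _)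
    have hPQ0 : 0 ≤ P * Q := mul_nonneg hP0 hQ0
    nlinarith [habs, f1, f2, f3, f4, hPQ0]
  · -- coercivity
    refine ⟨min (lam0 - B / 2 - γ₂ ^ 2 / 2) (1 / 2),
      lt_min (by linarith) (by norm_num), ?_⟩
    intro ψ hψ h0 h1
    set A := ∫ x in (0:ℝ)..1, (ψ x) ^ 2 with hAdef
    set Bq := ∫ x in (0:ℝ)..1, (iteratedDeriv 2 ψ x) ^ 2 with hBqdef
    set t3 := ∫ x in (0:ℝ)..1, ubar x * deriv ψ x * ψ x with ht3def
    set t4 := ∫ x in (0:ℝ)..1, iteratedDeriv 2 ψ x * ψ x with ht4def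
    have hA : 0 ≤ A := int_sq_nonneg ψ
    have hBq : 0 ≤ Bq := int_sq_nonneg _
    have ha2 : Real.sqrt A ^ 2 = A := Real.sq_sqrt hA
    have hb2 : Real.sqrt Bq ^ 2 = Bq := Real.sq_sqrt hBq
    have ha0 : 0 ≤ Real.sqrt A := Real.sqrt_nonneg _
    have hb0 : 0 ≤ Real.sqrt Bq := Real.sqrt_nonneg _
    have hT3 : -(B / 2) * A ≤ t3 := by
      rw [ht3def, ibp_ubar hubar hubar0 hubar1 hψ]
      have hmono : (∫ x in (0:ℝ)..1, deriv ubar x * (ψ x) ^ 2) ≤ B * A := by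
        rw [hAdef, ← intervalIntegral.integral_const_mul]
        apply intervalIntegral.integral_mono_on (by norm_num)
          (((hubar.continuous_deriv le_rfl).mul (hψ.continuous.pow 2)).intervalIntegrable _ _)
          ((continuous_const.mul (hψ.continuous.pow 2)).intervalIntegrable _ _)
        intro x hx
        have h := abs_le.mp (hB x hx)
        exact mul_le_mul_of_nonneg_right h.2 (sq_nonneg _)
      linarith
    have hT4abs : |t4| ≤ Real.sqrt Bq * Real.sqrt A := cs_int _ _ (cont_it2 hψ) hψ.continuous
    have hT4 : -(γ₂ ^ 2 / 2 * A + Bq / 2) ≤ γ₂ * t4 := by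
      have h1' : -(|γ₂| * (Real.sqrt Bq * Real.sqrt A)) ≤ γ₂ * t4 := by
        have hna := neg_abs_le (γ₂ * t4)
        have h2' : |γ₂ * t4| ≤ |γ₂| * (Real.sqrt Bq * Real.sqrt A) := by
          rw [abs_mul]
          exact mul_le_mul_of_nonneg_left hT4abs (abs_nonneg _)
        linarith
      have h3' : |γ₂| * (Real.sqrt Bq * Real.sqrt A) ≤ γ₂ ^ 2 / 2 * A + Bq / 2 := by
        nlinarith [sq_nonneg (|γ₂| * Real.sqrt A - Real.sqrt Bq), sq_abs γ₂, abs_nonneg γ₂]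
      linarith
    have hC1 : min (lam0 - B / 2 - γ₂ ^ 2 / 2) (1 / 2) ≤ lam0 - B / 2 - γ₂ ^ 2 / 2 :=
      min_le_left _ _
    have hC2 : min (lam0 - B / 2 - γ₂ ^ 2 / 2) (1 / 2) ≤ 1 / 2 := min_le_right _ _
    nlinarith [mul_le_mul_of_nonneg_right hC1 hA, mul_le_mul_of_nonneg_right hC2 hBq]
end
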